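/- Let 1/n ≪ ε ≪ 1 and let k ≤ 2εn be a positive integer. Let G be a strongly edge-colored graph on n vertices with δ(G) ≥ k/2 and Δ(G) ≤ εn. If G contains no rainbow matching of size k, then G uses exactly k − 1 colors. -/

import Mathlib

open SimpleGraph

def StronglyEdgeColored {V C : Type*} (G : SimpleGraph V) (c : Sym2 V → C) : Prop :=
  ∀ a b x y : V, G.Adj a b → G.Adj x y → c s(a, b) = c s(x, y) →
    s(a, b) = s(x, y) ∨
      (a ≠ x ∧ a ≠ y ∧ b ≠ x ∧ b ≠ y ∧
        ¬G.Adj a x ∧ ¬G.Adj a y ∧ ¬G.Adj b x ∧ ¬G.Adj b y)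

/-- `G` contains a rainbow matching with `k` edges. -/
def HasRainbowMatching {V C : Type*} (G : SimpleGraph V) (c : Sym2 V → C) (k : ℕ) : Prop :=
  ∃ M : G.Subgraph, M.IsMatching ∧ M.edgeSet.ncard = k ∧ Set.InjOn c M.edgeSet


open Finset

namespace Stmt8Aux

open scoped Classical

variable {V C : Type} [Fintype V] {G : SimpleGraph V} [DecidableRel G.Adj] {c : Sym2 V → C}

omit [Fintype V] [DecidableRel G.Adj] in
lemma inj_at (hs : StronglyEdgeColored G c) {u a b : V} (ha : G.Adj u a) (hb : G.Adj u b)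
    (hc : c s(u,a) = c s(u,b)) : a = b := by
  rcases hs u a u b ha hb hc with h | h
  · rcases Sym2.eq_iff.mp h with ⟨-, h2⟩ | ⟨h1, h2⟩
    · exact h2
    · exact absurd (h2 ▸ ha) (G.loopless.irrefl _)
  · exact absurd rfl h.1

omit [Fintype V] [DecidableRel G.Adj] in
lemma common_color (hs : StronglyEdgeColored G c) {u v a b : V} (huv : G.Adj u v)
    (ha : G.Adj u a) (hb : G.Adj v b) (hc : c s(u,a) = c s(v,b)) : a = v ∧ b = u := by
  rcases hs u a v b ha hb hc with h | h
  · rcases Sym2.eq_iff.mp h with ⟨h1, h2⟩ | ⟨h1, h2⟩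
    · exact absurd (h1 ▸ huv) (G.loopless.irrefl _)
    · exact ⟨h2, h1.symm⟩
  · exact absurd huv h.2.2.2.2.1

omit [Fintype V] [DecidableRel G.Adj] in
lemma class_disj (hs : StronglyEdgeColored G c) {e f : Sym2 V} (he : e ∈ G.edgeSet)
    (hf : f ∈ G.edgeSet) (hne : e ≠ f) (hc : c e = c f) {x : V} (hxe : x ∈ e) : x ∉ f := by
  induction e using Sym2.ind with
  | _ a b =>
  induction f using Sym2.ind with
  | _ p r =>
  rw [SimpleGraph.mem_edgeSet] at he hf
  rcases hs a b p r he hf hc with h | h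
  · exact absurd h hne
  · intro hxf
    rcases Sym2.mem_iff.mp hxe with rfl | rfl <;> rcases Sym2.mem_iff.mp hxf with rfl | rfl
    · exact h.1 rfl
    · exact h.2.1 rfl
    · exact h.2.2.1 rfl
    · exact h.2.2.2.1 rfl

omit [Fintype V] in
lemma hasRM_of_finset {k : ℕ} (F : Finset (Sym2 V)) (hFE : ∀ e ∈ F, e ∈ G.edgeSet)
    (hdisj : ∀ e ∈ F, ∀ f ∈ F, e ≠ f → ∀ x : V, x ∈ e → x ∉ f)
    (hinj : Set.InjOn c ↑F) (hcard : F.card = k) : HasRainbowMatching G c k := by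
  classical
  let M : G.Subgraph :=
    { verts := {v | ∃ e ∈ F, v ∈ e},
      Adj := fun u v => G.Adj u v ∧ s(u,v) ∈ F,
      adj_sub := fun h => h.1,
      edge_vert := fun {u v} h => ⟨s(u,v), h.2, Sym2.mem_mk_left _ _⟩,
      symm := ⟨fun u v h => ⟨h.1.symm, by simpa [Sym2.eq_swap] using h.2⟩⟩ }
  have hMadj : ∀ u v : V, M.Adj u v ↔ (G.Adj u v ∧ s(u,v) ∈ F) := fun u v => Iff.rfl
  have hES : M.edgeSet = ↑F := by
    ext e
    induction e using Sym2.ind with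
    | _ u v =>
    rw [SimpleGraph.Subgraph.mem_edgeSet, Finset.mem_coe, hMadj]
    exact ⟨fun h => h.2, fun h => ⟨(SimpleGraph.mem_edgeSet G).mp (hFE _ h), h⟩⟩
  refine ⟨M, ?_, ?_, ?_⟩
  · intro v hv
    obtain ⟨e, heF, hve⟩ := hv
    induction e using Sym2.ind with
    | _ a b =>
    have hadj : G.Adj a b := (SimpleGraph.mem_edgeSet G).mp (hFE _ heF)
    have key : ∀ z w : V, z ∈ s(a,b) → w ∈ s(a,b) → z ≠ w → ∃! x, M.Adj z x := by
      intro z w hz hw hzw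
      have hzw' : s(z,w) = s(a,b) := by
        rcases Sym2.mem_iff.mp hz with rfl | rfl <;> rcases Sym2.mem_iff.mp hw with rfl | rfl
        · exact absurd rfl hzw
        · rfl
        · exact Sym2.eq_swap
        · exact absurd rfl hzw
      refine ⟨w, ⟨?_, ?_⟩, ?_⟩
      · exact (SimpleGraph.mem_edgeSet G).mp (hFE _ (hzw' ▸ heF))
      · rw [hzw']; exact heF
      · intro y hy
        by_contra hyw
        have hmem : s(z,y) ∈ F := hy.2
        have hne : s(z,y) ≠ s(a,b) := by
          intro hh
          rw [← hzw'] at hh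
          exact hyw (Sym2.congr_right.mp hh)
        exact hdisj _ hmem _ heF hne z (Sym2.mem_mk_left _ _) hz
    rcases Sym2.mem_iff.mp hve with rfl | rfl
    · exact key v b (Sym2.mem_mk_left _ _) (Sym2.mem_mk_right _ _) hadj.ne
    · exact key v a (Sym2.mem_mk_right _ _) (Sym2.mem_mk_left _ _) hadj.ne'
  · rw [hES, Set.ncard_coe_finset, hcard]
  · rw [hES]; exact hinj

lemma greedy (hs : StronglyEdgeColored G c) (k : ℕ) (B : Finset C) :
    (∀ γ ∈ B, 2*k ≤ (G.edgeFinset.filter (fun e => c e = γ)).card + 1) →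
    ∀ F : Finset (Sym2 V), (∀ e ∈ F, e ∈ G.edgeSet) →
      (∀ e ∈ F, ∀ f ∈ F, e ≠ f → ∀ x : V, x ∈ e → x ∉ f) →
      Set.InjOn c ↑F → (∀ e ∈ F, c e ∉ B) → F.card + B.card ≤ k →
      ∃ F' : Finset (Sym2 V), (∀ e ∈ F', e ∈ G.edgeSet) ∧
        (∀ e ∈ F', ∀ f ∈ F', e ≠ f → ∀ x : V, x ∈ e → x ∉ f) ∧
        Set.InjOn c ↑F' ∧ F'.card = F.card + B.card := by
  induction B using Finset.induction_on with
  | empty =>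
    intro _ F h1 h2 h3 _ _
    exact ⟨F, h1, h2, h3, by simp⟩
  | @insert γ B' hγB' ih =>
    intro hB F hFE hdisj hinj hcol hcard
    rw [card_insert_of_notMem hγB'] at hcard
    set K : Finset (Sym2 V) := G.edgeFinset.filter (fun e => c e = γ) with hK
    have hKbig : 2*k ≤ K.card + 1 := hB γ (mem_insert_self _ _)
    have hKE : ∀ f ∈ K, f ∈ G.edgeSet ∧ c f = γ := by
      intro f hf; rw [hK, mem_filter, mem_edgeFinset] at hf; exact hf
    have fiber2 : ∀ e0 : Sym2 V, (K.filter (fun f => ∃ x : V, x ∈ f ∧ x ∈ e0)).card ≤ 2 := by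
      intro e0
      induction e0 using Sym2.ind with
      | _ p r =>
      have hsub : (K.filter (fun f => ∃ x : V, x ∈ f ∧ x ∈ s(p,r))) ⊆
          (K.filter (fun f => p ∈ f)) ∪ (K.filter (fun f => r ∈ f)) := by
        intro f hf
        rw [mem_filter] at hf
        obtain ⟨hfK, x, hxf, hxe⟩ := hf
        rcases Sym2.mem_iff.mp hxe with rfl | rfl
        · exact mem_union_left _ (mem_filter.mpr ⟨hfK, hxf⟩)
        · exact mem_union_right _ (mem_filter.mpr ⟨hfK, hxf⟩)
      have hone : ∀ z : V, (K.filter (fun f => z ∈ f)).card ≤ 1 := by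
        intro z
        apply Finset.card_le_one.mpr
        intro f1 hf1 f2 hf2
        rw [mem_filter] at hf1 hf2
        by_contra hne
        exact class_disj hs (hKE _ hf1.1).1 (hKE _ hf2.1).1 hne
          ((hKE _ hf1.1).2.trans (hKE _ hf2.1).2.symm) hf1.2 hf2.2
      calc _ ≤ _ := Finset.card_le_card hsub
        _ ≤ (K.filter (fun f => p ∈ f)).card + (K.filter (fun f => r ∈ f)).card :=
            Finset.card_union_le _ _
        _ ≤ 2 := by have := hone p; have := hone r; omega
    set touching := K.filter (fun f => ∃ e ∈ F, ∃ x : V, x ∈ f ∧ x ∈ e) with htouch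
    have htcard : touching.card ≤ 2 * F.card := by
      set g : Sym2 V → Sym2 V := fun f =>
        if h : ∃ e ∈ F, ∃ x : V, x ∈ f ∧ x ∈ e then h.choose else f with hg
      have hmaps : ∀ f ∈ touching, g f ∈ F := by
        intro f hf
        rw [htouch, mem_filter] at hf
        rw [hg]; simp only [dif_pos hf.2]
        exact hf.2.choose_spec.1
      have himg : touching.image g ⊆ F := by
        intro e he
        obtain ⟨f, hf, rfl⟩ := mem_image.mp he
        exact hmaps f hf
      have h1 : touching.card ≤ 2 * (touching.image g).card := by
        apply Finset.card_le_mul_card_image_of_maps_to (fun f hf => mem_image_of_mem g hf) 2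
        intro e0 _
        refine le_trans (Finset.card_le_card ?_) (fiber2 e0)
        intro f hf
        rw [mem_filter] at hf
        obtain ⟨hft, hge⟩ := hf
        rw [htouch, mem_filter] at hft
        obtain ⟨hfK, hex⟩ := hft
        rw [mem_filter]
        refine ⟨hfK, ?_⟩
        have hgspec := hex.choose_spec
        rw [hg] at hge; simp only [dif_pos hex] at hge
        obtain ⟨x, hx1, hx2⟩ := hgspec.2
        exact ⟨x, hx1, hge ▸ hx2⟩
      exact le_trans h1 (Nat.mul_le_mul_left 2 (Finset.card_le_card himg))
    have hfree : ∃ e' ∈ K, ¬ ∃ e ∈ F, ∃ x : V, x ∈ e' ∧ x ∈ e := by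
      have hsplit := Finset.card_filter_add_card_filter_not
        (s := K) (p := fun f => ∃ e ∈ F, ∃ x : V, x ∈ f ∧ x ∈ e)
      by_contra hno
      push_neg at hno
      have : K.filter (fun f => ¬ ∃ e ∈ F, ∃ x : V, x ∈ f ∧ x ∈ e) = ∅ := by
        apply Finset.filter_eq_empty_iff.mpr
        intro f hf
        push_neg
        exact hno f hf
      rw [this] at hsplit
      simp only [card_empty, add_zero] at hsplit
      rw [← htouch] at hsplit
      omega
    obtain ⟨e', he'K, he'free⟩ := hfree
    obtain ⟨he'E, he'c⟩ := hKE _ he'K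
    have he'F : e' ∉ F := by
      intro h
      exact he'free ⟨e', h, e'.out.1, Sym2.out_fst_mem e', Sym2.out_fst_mem e'⟩
    have hnewdisj : ∀ e ∈ insert e' F, ∀ f ∈ insert e' F, e ≠ f → ∀ x : V, x ∈ e → x ∉ f := by
      intro e he f hf hne x hxe hxf
      rcases mem_insert.mp he with rfl | heF <;> rcases mem_insert.mp hf with rfl | hfF
      · exact hne rfl
      · exact he'free ⟨f, hfF, x, hxe, hxf⟩
      · exact he'free ⟨e, heF, x, hxf, hxe⟩
      · exact hdisj e heF f hfF hne x hxe hxf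
    have hnewcol : ∀ e ∈ F, c e ≠ γ := by
      intro e heF h
      exact hcol e heF (h ▸ mem_insert_self γ B')
    have hnewinj : Set.InjOn c ↑(insert e' F) := by
      rw [Finset.coe_insert]
      rw [Set.injOn_insert (fun h => he'F (Finset.mem_coe.mp h))]
      refine ⟨hinj, ?_⟩
      rw [he'c]
      rintro ⟨e, he, hce⟩
      exact hnewcol e (Finset.mem_coe.mp he) hce
    obtain ⟨F', hF'1, hF'2, hF'3, hF'4⟩ := ih (fun γ' hγ' => hB γ' (mem_insert_of_mem hγ'))
      (insert e' F)
      (by intro e he; rcases mem_insert.mp he with rfl | h; exacts [he'E, hFE e h])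
      hnewdisj hnewinj
      (by intro e he; rcases mem_insert.mp he with rfl | h
          · rw [he'c]; exact hγB'
          · intro hmem; exact hcol e h (mem_insert_of_mem hmem))
      (by rw [card_insert_of_notMem he'F]; omega)
    refine ⟨F', hF'1, hF'2, hF'3, ?_⟩
    rw [hF'4, card_insert_of_notMem he'F, card_insert_of_notMem hγB']
    omega

end Stmt8Aux

theorem stmt_8 :
    ∃ ε : ℝ, 0 < ε ∧ ε < 1 ∧
      ∃ n0 : ℕ, ∀ (V C : Type) [Fintype V] (G : SimpleGraph V) [DecidableRel G.Adj]
        (c : Sym2 V → C) (k : ℕ),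
        n0 ≤ Fintype.card V → 0 < k → (k : ℝ) ≤ 2 * ε * Fintype.card V →
        StronglyEdgeColored G c →
        (∀ v : V, k ≤ 2 * G.degree v) →
        (∀ v : V, (G.degree v : ℝ) ≤ ε * Fintype.card V) →
        ¬HasRainbowMatching G c k →
        (c '' G.edgeSet).ncard = k - 1 := by
  classical
  refine ⟨1/1000, by norm_num, by norm_num, 1, ?_⟩
  intro V C _ G _ c k hn hk hk2 hs hδ hΔ hNR
  set n := Fintype.card V with hndef
  -- integer versions of the real hypotheses
  have hkn : 500 * k ≤ n := by
    have h2 : (2 * (1/1000 : ℝ) * n) = n / 500 := by ring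
    rw [h2] at hk2
    have : (500 : ℝ) * k ≤ n := by
      rw [div_eq_mul_inv] at hk2
      nlinarith [hk2]
    exact_mod_cast this
  have hdeg1000 : ∀ v : V, 1000 * G.degree v ≤ n := by
    intro v
    have := hΔ v
    have : (1000 : ℝ) * G.degree v ≤ n := by nlinarith [this]
    exact_mod_cast this
  
  -- basic edge/color machinery
  have hedge : ∀ u w : V, G.Adj u w → s(u,w) ∈ G.edgeFinset := by
    intro u w h; rw [mem_edgeFinset, SimpleGraph.mem_edgeSet]; exact h
  set E : Finset (Sym2 V) := G.edgeFinset with hE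
  set allCol : Finset C := E.image c with hallCol
  set Big : C → Prop := fun γ => 2*k ≤ (E.filter (fun e => c e = γ)).card + 1 with hBig
  set Sv : V → Finset C := fun v => (G.neighborFinset v).image (fun w => c s(v,w)) with hSv
  have hSvcard : ∀ v : V, (Sv v).card = G.degree v := by
    intro v
    rw [hSv]
    rw [Finset.card_image_of_injOn, card_neighborFinset_eq_degree]
    intro w1 h1 w2 h2 hcc
    exact Stmt8Aux.inj_at hs ((SimpleGraph.mem_neighborFinset _ _ _).mp (mem_coe.mp h1))
      ((SimpleGraph.mem_neighborFinset _ _ _).mp (mem_coe.mp h2)) hcc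
  have hSvsub : ∀ v : V, Sv v ⊆ allCol := by
    intro v γ hγ
    rw [hSv] at hγ
    obtain ⟨w, hw, rfl⟩ := mem_image.mp hγ
    exact mem_image.mpr ⟨s(v,w), hedge v w ((SimpleGraph.mem_neighborFinset _ _ _).mp hw), rfl⟩
  have hSS : ∀ u v : V, G.Adj u v → ((Sv u) ∩ (Sv v)).card ≤ 1 := by
    intro u v huv
    have hsub : (Sv u) ∩ (Sv v) ⊆ {c s(u,v)} := by
      intro γ hγ
      rw [mem_inter] at hγ
      obtain ⟨w1, hw1, hc1⟩ := mem_image.mp hγ.1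
      obtain ⟨w2, hw2, hc2⟩ := mem_image.mp hγ.2
      have hcom := Stmt8Aux.common_color hs huv ((SimpleGraph.mem_neighborFinset _ _ _).mp hw1)
        ((SimpleGraph.mem_neighborFinset _ _ _).mp hw2) (hc1.trans hc2.symm)
      rw [mem_singleton, ← hc1, hcom.1]
    exact le_trans (card_le_card hsub) (by simp)
  have hpairk : ∀ u v : V, G.Adj u v → k ≤ ((Sv u) ∪ (Sv v)).card + 1 := by
    intro u v huv
    have h1 : k ≤ G.degree u + G.degree v := by
      have := hδ u; have := hδ v; omega
    have h2 := Finset.card_union_add_card_inter (Sv u) (Sv v)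
    have h3 := hSS u v huv
    rw [hSvcard, hSvcard] at h2
    omega
  -- lower bound on the number of colors
  have hcolk : k ≤ allCol.card + 1 := by
    have hV : Nonempty V := Fintype.card_pos_iff.mp (by omega)
    obtain ⟨v0⟩ := hV
    have hd0 : 0 < G.degree v0 := by have := hδ v0; omega
    have hne : (G.neighborFinset v0).Nonempty := by
      rw [← card_pos, card_neighborFinset_eq_degree]; exact hd0
    obtain ⟨u0, hu0⟩ := hne
    have hadj : G.Adj v0 u0 := (SimpleGraph.mem_neighborFinset _ _ _).mp hu0
    refine le_trans (hpairk v0 u0 hadj) ?_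
    have : (Sv v0) ∪ (Sv u0) ⊆ allCol := union_subset (hSvsub v0) (hSvsub u0)
    have := card_le_card this
    omega
  -- maximal small rainbow matching Q
  set cand : Finset (Finset (Sym2 V)) := E.powerset.filter (fun Q =>
    (∀ e ∈ Q, ¬ Big (c e)) ∧
    (∀ e ∈ Q, ∀ f ∈ Q, e ≠ f → ∀ x : V, x ∈ e → x ∉ f) ∧
    Set.InjOn c ↑Q) with hcand
  have hcand_empty : (∅ : Finset (Sym2 V)) ∈ cand := by
    rw [hcand, mem_filter]
    refine ⟨mem_powerset.mpr (empty_subset _), ?_, ?_, ?_⟩ <;> simp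
  obtain ⟨Q, hQcand, hQmax⟩ := Finset.exists_max_image cand card ⟨∅, hcand_empty⟩
  rw [hcand, mem_filter] at hQcand
  obtain ⟨hQpow, hQsmall, hQdisj, hQinj⟩ := hQcand
  have hQE : ∀ e ∈ Q, e ∈ G.edgeSet := by
    intro e he
    have := mem_powerset.mp hQpow he
    rwa [hE, mem_edgeFinset] at this
  set q := Q.card with hq
  set bigCol := allCol.filter Big with hbigCol
  set b := bigCol.card with hb
  -- E2 : b + q < k
  have hbq : b + q < k := by
    by_contra hcon
    push_neg at hcon
    apply hNR
    by_cases hqk : k ≤ q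
    · obtain ⟨F, hFQ, hFcard⟩ := Finset.exists_subset_card_eq hqk
      exact Stmt8Aux.hasRM_of_finset F (fun e he => hQE e (hFQ he))
        (fun e he f hf => hQdisj e (hFQ he) f (hFQ hf))
        (hQinj.mono (coe_subset.mpr hFQ)) hFcard
    · push_neg at hqk
      have hbk : k - q ≤ b := by omega
      obtain ⟨B, hBsub, hBcard⟩ := Finset.exists_subset_card_eq hbk
      have hBbig : ∀ γ ∈ B, 2*k ≤ (G.edgeFinset.filter (fun e => c e = γ)).card + 1 := by
        intro γ hγ
        have := hBsub hγ
        rw [hbigCol, mem_filter] at this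
        exact this.2
      obtain ⟨F', h1, h2, h3, h4⟩ := Stmt8Aux.greedy hs k B hBbig Q hQE hQdisj hQinj
        (by
          intro e he hmem
          have := hBsub hmem
          rw [hbigCol, mem_filter] at this
          exact hQsmall e he this.2)
        (by rw [hBcard]; omega)
      exact Stmt8Aux.hasRM_of_finset F' h1 h2 h3 (by rw [h4, hBcard]; omega)
  
  -- small-color degree
  set sig : V → ℕ := fun u => ((G.neighborFinset u).filter (fun w => ¬ Big (c s(u,w)))).card
    with hsig
  have hdegb : ∀ u : V, G.degree u ≤ b + sig u := by
    intro u
    rw [← hSvcard u]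
    have hsplit := Finset.card_filter_add_card_filter_not (s := Sv u) (p := Big)
    have h1 : ((Sv u).filter Big).card ≤ b := by
      apply card_le_card
      intro γ hγ
      rw [mem_filter] at hγ
      rw [hbigCol, mem_filter]
      exact ⟨hSvsub u hγ.1, hγ.2⟩
    have h2 : ((Sv u).filter (fun γ => ¬ Big γ)).card ≤ sig u := by
      have hsub : (Sv u).filter (fun γ => ¬ Big γ) ⊆
          ((G.neighborFinset u).filter (fun w => ¬ Big (c s(u,w)))).image (fun w => c s(u,w)) := by
        intro γ hγ
        rw [mem_filter] at hγ
        obtain ⟨hγS, hγsm⟩ := hγ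
        rw [hSv] at hγS
        obtain ⟨w, hw, rfl⟩ := mem_image.mp hγS
        exact mem_image.mpr ⟨w, mem_filter.mpr ⟨hw, hγsm⟩, rfl⟩
      exact le_trans (card_le_card hsub) (card_image_le)
    omega
  -- demand
  have hdemand : ∀ u v : V, G.Adj u v → q ≤ sig u + sig v := by
    intro u v huv
    have h1 : k ≤ ((Sv u) ∪ (Sv v)).card + 1 := hpairk u v huv
    have h2 : ((Sv u) ∪ (Sv v)).card ≤ b + (sig u + sig v) := by
      have hsplit := Finset.card_filter_add_card_filter_not
        (s := (Sv u) ∪ (Sv v)) (p := Big)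
      have hbigb : (((Sv u) ∪ (Sv v)).filter Big).card ≤ b := by
        apply card_le_card
        intro γ hγ
        rw [mem_filter] at hγ
        rw [hbigCol, mem_filter]
        refine ⟨?_, hγ.2⟩
        rcases mem_union.mp hγ.1 with h | h
        exacts [hSvsub u h, hSvsub v h]
      have hsmall2 : (((Sv u) ∪ (Sv v)).filter (fun γ => ¬ Big γ)).card ≤ sig u + sig v := by
        rw [filter_union]
        refine le_trans (card_union_le _ _) ?_
        have key : ∀ z : V, ((Sv z).filter (fun γ => ¬ Big γ)).card ≤ sig z := by
          intro z
          have hsub : (Sv z).filter (fun γ => ¬ Big γ) ⊆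
              ((G.neighborFinset z).filter (fun w => ¬ Big (c s(z,w)))).image
                (fun w => c s(z,w)) := by
            intro γ hγ
            rw [mem_filter] at hγ
            obtain ⟨hγS, hγsm⟩ := hγ
            rw [hSv] at hγS
            obtain ⟨w, hw, rfl⟩ := mem_image.mp hγS
            exact mem_image.mpr ⟨w, mem_filter.mpr ⟨hw, hγsm⟩, rfl⟩
          exact le_trans (card_le_card hsub) (card_image_le)
        have := key u; have := key v; omega
      omega
    omega
  -- vertex set of Q
  set VQ : Finset V := Q.biUnion (fun e => univ.filter (fun x => x ∈ e)) with hVQ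
  have hVQmem : ∀ x : V, x ∈ VQ ↔ ∃ e ∈ Q, x ∈ e := by
    intro x
    rw [hVQ, mem_biUnion]
    constructor
    · rintro ⟨e, he, hx⟩; exact ⟨e, he, (mem_filter.mp hx).2⟩
    · rintro ⟨e, he, hx⟩; exact ⟨e, he, mem_filter.mpr ⟨mem_univ x, hx⟩⟩
  have hVQcard : VQ.card ≤ 2 * q := by
    rw [hVQ]
    refine le_trans (card_biUnion_le) ?_
    have : ∀ e ∈ Q, (univ.filter (fun x : V => x ∈ e)).card ≤ 2 := by
      intro e _
      induction e using Sym2.ind with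
      | _ a b' =>
      have hsub : (univ.filter (fun x : V => x ∈ s(a,b'))) ⊆ {a, b'} := by
        intro x hx
        rw [mem_filter] at hx
        rcases Sym2.mem_iff.mp hx.2 with rfl | rfl
        · exact mem_insert_self _ _
        · exact mem_insert_of_mem (mem_singleton_self _)
      exact le_trans (card_le_card hsub) (card_insert_le _ _ |>.trans (by simp))
    refine le_trans (Finset.sum_le_card_nsmul _ _ 2 this) ?_
    rw [smul_eq_mul, hq]; omega
  -- blocked edges end in VQ
  set Qimg : Finset C := Q.image c with hQimg
  have hQimgsmall : ∀ γ ∈ Qimg, ¬ Big γ := by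
    intro γ hγ
    obtain ⟨e, he, rfl⟩ := mem_image.mp hγ
    exact hQsmall e he
  have hQimgcard : Qimg.card ≤ q := card_image_le
  have hblocked : ∀ u w : V, u ∉ VQ → G.Adj u w → ¬ Big (c s(u,w)) →
      c s(u,w) ∉ Qimg → w ∈ VQ := by
    intro u w hu hadj hsmall hnotim
    by_contra hw
    have hnotQ : s(u,w) ∉ Q := fun h => hnotim (mem_image_of_mem c h)
    have hins : insert s(u,w) Q ∈ cand := by
      rw [hcand, mem_filter]
      refine ⟨mem_powerset.mpr ?_, ?_, ?_, ?_⟩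
      · intro e he
        rcases mem_insert.mp he with rfl | h
        · exact hedge _ _ hadj
        · exact mem_powerset.mp hQpow h
      · intro e he
        rcases mem_insert.mp he with rfl | h
        · exact hsmall
        · exact hQsmall e h
      · intro e he f hf hne x hxe hxf
        have hVQx : ∀ z : V, z ∈ s(u,w) → z ∉ VQ := by
          intro z hz
          rcases Sym2.mem_iff.mp hz with rfl | rfl
          exacts [hu, hw]
        rcases mem_insert.mp he with rfl | heQ <;> rcases mem_insert.mp hf with rfl | hfQ
        · exact hne rfl
        · exact (hVQx x hxe) ((hVQmem x).mpr ⟨f, hfQ, hxf⟩)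
        · exact (hVQx x hxf) ((hVQmem x).mpr ⟨e, heQ, hxe⟩)
        · exact hQdisj e heQ f hfQ hne x hxe hxf
      · rw [coe_insert, Set.injOn_insert (fun h => hnotQ (Finset.mem_coe.mp h))]
        refine ⟨hQinj, ?_⟩
        rintro ⟨e, he, hce⟩
        exact hnotim (mem_image.mpr ⟨e, Finset.mem_coe.mp he, hce⟩)
    have hle := hQmax _ hins
    rw [card_insert_of_notMem hnotQ] at hle
    omega
  -- used/blocked split
  set usd : V → ℕ := fun u =>
    ((G.neighborFinset u).filter (fun w => c s(u,w) ∈ Qimg)).card with husd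
  set blk : V → ℕ := fun u =>
    ((G.neighborFinset u).filter (fun w => ¬ Big (c s(u,w)) ∧ c s(u,w) ∉ Qimg)).card with hblk
  have hsigsplit : ∀ u : V, sig u = usd u + blk u := by
    intro u
    rw [hsig, husd, hblk]
    have hsplit := Finset.card_filter_add_card_filter_not
      (s := (G.neighborFinset u).filter (fun w => ¬ Big (c s(u,w))))
      (p := fun w => c s(u,w) ∈ Qimg)
    rw [filter_filter, filter_filter] at hsplit
    have e1 : (G.neighborFinset u).filter (fun w => ¬ Big (c s(u,w)) ∧ c s(u,w) ∈ Qimg) =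
        (G.neighborFinset u).filter (fun w => c s(u,w) ∈ Qimg) := by
      apply filter_congr
      intro w _
      constructor
      · exact fun h => h.2
      · exact fun h => ⟨hQimgsmall _ h, h⟩
    rw [e1] at hsplit
    simp only at hsplit ⊢
    omega
  have husd_le : ∀ u : V, usd u ≤ q := by
    intro u
    rw [husd]
    refine le_trans (Finset.card_le_card_of_injOn (fun w => c s(u,w)) ?_ ?_) hQimgcard
    · intro w hw
      exact (mem_filter.mp hw).2
    · intro w1 h1 w2 h2 hcc
      exact Stmt8Aux.inj_at hs
        ((SimpleGraph.mem_neighborFinset _ _ _).mp (mem_filter.mp (Finset.mem_coe.mp h1)).1)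
        ((SimpleGraph.mem_neighborFinset _ _ _).mp (mem_filter.mp (Finset.mem_coe.mp h2)).1) hcc
  have hblk_le : ∀ u : V, u ∉ VQ → blk u ≤ 2 * q := by
    intro u hu
    rw [hblk]
    refine le_trans (card_le_card ?_) hVQcard
    intro w hw
    rw [mem_filter] at hw
    exact hblocked u w hu ((SimpleGraph.mem_neighborFinset _ _ _).mp hw.1) hw.2.1 hw.2.2
  have hqk : q < k := by omega
  have hdeg3k : ∀ u : V, u ∉ VQ → G.degree u ≤ 3 * k := by
    intro u hu
    have h1 := hdegb u
    have h2 := hsigsplit u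
    have h3 := husd_le u
    have h4 := hblk_le u hu
    omega
  
  -- the double counting
  set out : Finset V := univ.filter (fun u => u ∉ VQ) with hout
  set cnt1 : V → ℕ := fun u =>
    (univ.filter (fun w => G.Adj u w ∧ u ∉ VQ ∧ w ∉ VQ)).card with hcnt1
  set cnt2 : V → ℕ := fun w =>
    (univ.filter (fun u => G.Adj u w ∧ u ∉ VQ ∧ w ∉ VQ)).card with hcnt2
  set T : ℕ := ∑ u, cnt1 u with hT
  set Bsum : ℕ := ∑ x ∈ VQ, G.degree x with hBsum
  set Ssum : ℕ := ∑ u ∈ out, sig u with hSsumdef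
  have hcnt1_le : ∀ u : V, cnt1 u ≤ G.degree u := by
    intro u
    rw [hcnt1, ← card_neighborFinset_eq_degree]
    apply card_le_card
    intro w hw
    rw [mem_filter] at hw
    exact (SimpleGraph.mem_neighborFinset _ _ _).mpr hw.2.1
  have hcnt1_zero : ∀ u : V, u ∈ VQ → cnt1 u = 0 := by
    intro u hu
    rw [hcnt1, card_eq_zero]
    apply Finset.filter_eq_empty_iff.mpr
    intro w _ hc
    exact hc.2.1 hu
  have hcnt2_le : ∀ w : V, cnt2 w ≤ G.degree w := by
    intro w
    rw [hcnt2, ← card_neighborFinset_eq_degree]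
    apply card_le_card
    intro u hu
    rw [mem_filter] at hu
    exact (SimpleGraph.mem_neighborFinset _ _ _).mpr hu.2.1.symm
  have hcnt2_zero : ∀ w : V, w ∈ VQ → cnt2 w = 0 := by
    intro w hw
    rw [hcnt2, card_eq_zero]
    apply Finset.filter_eq_empty_iff.mpr
    intro u _ hc
    exact hc.2.2 hw
  -- ∑ over all u of edges from u into VQ equals Bsum
  have hNBVQ : ∀ u : V, ((G.neighborFinset u).filter (fun w => w ∈ VQ)) =
      VQ.filter (fun w => G.Adj u w) := by
    intro u
    ext w
    rw [mem_filter, mem_filter, SimpleGraph.mem_neighborFinset]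
    tauto
  have hsumNBVQ : (∑ u, ((G.neighborFinset u).filter (fun w => w ∈ VQ)).card) = Bsum := by
    have e1 : ∀ u : V, ((G.neighborFinset u).filter (fun w => w ∈ VQ)).card
        = ∑ w ∈ VQ, (if G.Adj u w then 1 else 0) := by
      intro u
      rw [hNBVQ u, Finset.card_filter]
    rw [Finset.sum_congr rfl (fun u _ => e1 u), Finset.sum_comm]
    rw [hBsum]
    apply Finset.sum_congr rfl
    intro w hw
    rw [← Finset.card_filter]
    rw [← card_neighborFinset_eq_degree]
    congr 1
    ext u
    rw [mem_filter, SimpleGraph.mem_neighborFinset]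
    constructor
    · exact fun h => h.2.symm
    · exact fun h => ⟨mem_univ u, h.symm⟩
  -- lower bound for T
  have hTlow : n * k ≤ 2 * T + 4 * Bsum := by
    have hdeg_split : ∀ u : V, u ∉ VQ →
        G.degree u = cnt1 u + ((G.neighborFinset u).filter (fun w => w ∈ VQ)).card := by
      intro u hu
      have e2 : cnt1 u = ((G.neighborFinset u).filter (fun w => w ∉ VQ)).card := by
        simp only [hcnt1]
        apply congrArg Finset.card
        ext w
        rw [mem_filter, mem_filter, SimpleGraph.mem_neighborFinset]
        constructor
        · rintro ⟨-, h1, -, h3⟩; exact ⟨h1, h3⟩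
        · rintro ⟨h1, h3⟩; exact ⟨mem_univ w, h1, hu, h3⟩
      have := Finset.card_filter_add_card_filter_not
        (s := G.neighborFinset u) (p := fun w => w ∈ VQ)
      rw [card_neighborFinset_eq_degree] at this
      omega
    have hsum_deg : n * k ≤ ∑ u, 2 * G.degree u := by
      calc n * k = ∑ _u : V, k := by rw [Finset.sum_const, card_univ, smul_eq_mul]
        _ ≤ ∑ u, 2 * G.degree u := Finset.sum_le_sum (fun u _ => hδ u)
    have hsplitsum := Finset.sum_filter_add_sum_filter_not univ
      (fun u => u ∉ VQ) (fun u => G.degree u)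
    have hfiltVQ : univ.filter (fun u : V => ¬ u ∉ VQ) = VQ := by
      ext u
      rw [mem_filter]
      constructor
      · exact fun h => not_not.mp h.2
      · exact fun h => ⟨mem_univ u, not_not.mpr h⟩
    have hsum_out : ∑ u ∈ out, G.degree u ≤ T + Bsum := by
      have e3 : ∑ u ∈ out, G.degree u =
          ∑ u ∈ out, cnt1 u +
          ∑ u ∈ out, ((G.neighborFinset u).filter (fun w => w ∈ VQ)).card := by
        rw [← Finset.sum_add_distrib]
        apply Finset.sum_congr rfl
        intro u hu
        rw [hout, mem_filter] at hu
        exact hdeg_split u hu.2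
      have e4 : ∑ u ∈ out, cnt1 u ≤ T := by
        rw [hT]
        exact Finset.sum_le_sum_of_subset (filter_subset _ _)
      have e5 : ∑ u ∈ out, ((G.neighborFinset u).filter (fun w => w ∈ VQ)).card ≤ Bsum := by
        rw [← hsumNBVQ]
        exact Finset.sum_le_sum_of_subset (filter_subset _ _)
      omega
    have hsum_VQ : ∑ u ∈ univ.filter (fun u : V => ¬ u ∉ VQ), G.degree u = Bsum := by
      rw [hfiltVQ, hBsum]
    have htot : ∑ u, G.degree u ≤ T + 2 * Bsum := by
      rw [← hsplitsum, ← hout] at *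
      omega
    have : ∑ u, 2 * G.degree u = 2 * ∑ u, G.degree u := by
      rw [Finset.mul_sum]
    omega
  
  -- demand: q * T ≤ S2
  set S2 : ℕ := ∑ u, ∑ w, (if (G.Adj u w ∧ u ∉ VQ ∧ w ∉ VQ) then sig u + sig w else 0)
    with hS2def
  have hqT : q * T ≤ S2 := by
    rw [hT, hS2def, Finset.mul_sum]
    apply Finset.sum_le_sum
    intro u _
    have e1 : q * cnt1 u = ∑ w, (if (G.Adj u w ∧ u ∉ VQ ∧ w ∉ VQ) then q else 0) := by
      simp only [hcnt1]
      rw [Finset.card_filter, Finset.mul_sum]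
      apply Finset.sum_congr rfl
      intro w _
      rw [mul_ite, mul_one, mul_zero]
    rw [e1]
    apply Finset.sum_le_sum
    intro w _
    split_ifs with hcon
    · exact hdemand u w hcon.1
    · exact le_refl 0
  -- split S2
  set Aterm : ℕ := ∑ u, sig u * cnt1 u with hAterm
  set Bterm : ℕ := ∑ w, sig w * cnt2 w with hBterm
  have hS2split : S2 = Aterm + Bterm := by
    rw [hS2def, hAterm, hBterm]
    have e1 : ∀ u w : V, (if (G.Adj u w ∧ u ∉ VQ ∧ w ∉ VQ) then sig u + sig w else 0)
        = (if (G.Adj u w ∧ u ∉ VQ ∧ w ∉ VQ) then sig u else 0)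
          + (if (G.Adj u w ∧ u ∉ VQ ∧ w ∉ VQ) then sig w else 0) := by
      intro u w; split_ifs <;> simp
    calc ∑ u, ∑ w, (if (G.Adj u w ∧ u ∉ VQ ∧ w ∉ VQ) then sig u + sig w else 0)
        = ∑ u, (∑ w, (if (G.Adj u w ∧ u ∉ VQ ∧ w ∉ VQ) then sig u else 0)
            + ∑ w, (if (G.Adj u w ∧ u ∉ VQ ∧ w ∉ VQ) then sig w else 0)) := by
          apply Finset.sum_congr rfl
          intro u _
          rw [← Finset.sum_add_distrib]
          exact Finset.sum_congr rfl (fun w _ => e1 u w)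
      _ = (∑ u, ∑ w, (if (G.Adj u w ∧ u ∉ VQ ∧ w ∉ VQ) then sig u else 0))
          + (∑ u, ∑ w, (if (G.Adj u w ∧ u ∉ VQ ∧ w ∉ VQ) then sig w else 0)) :=
          Finset.sum_add_distrib
      _ = _ := by
          congr 1
          · apply Finset.sum_congr rfl
            intro u _
            simp only [hcnt1]
            rw [Finset.card_filter, Finset.mul_sum]
            apply Finset.sum_congr rfl
            intro w _
            rw [mul_ite, mul_one, mul_zero]
          · rw [Finset.sum_comm]
            apply Finset.sum_congr rfl
            intro w _
            simp only [hcnt2]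
            rw [Finset.card_filter, Finset.mul_sum]
            apply Finset.sum_congr rfl
            intro u _
            rw [mul_ite, mul_one, mul_zero]
  have hA3 : Aterm ≤ 3 * k * Ssum := by
    rw [hAterm]
    have hsplitsum := Finset.sum_filter_add_sum_filter_not univ
      (fun u => u ∉ VQ) (fun u => sig u * cnt1 u)
    have hzero : ∑ u ∈ univ.filter (fun u : V => ¬ u ∉ VQ), sig u * cnt1 u = 0 := by
      apply Finset.sum_eq_zero
      intro u hu
      rw [mem_filter] at hu
      rw [hcnt1_zero u (not_not.mp hu.2), mul_zero]
    have hbound : ∑ u ∈ out, sig u * cnt1 u ≤ 3 * k * Ssum := by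
      rw [hSsumdef, Finset.mul_sum]
      apply Finset.sum_le_sum
      intro u hu
      rw [hout, mem_filter] at hu
      calc sig u * cnt1 u ≤ sig u * (3*k) := by
            apply Nat.mul_le_mul_left
            exact le_trans (hcnt1_le u) (hdeg3k u hu.2)
        _ = 3 * k * sig u := by ring
    rw [hout] at hbound
    omega
  have hB3 : Bterm ≤ 3 * k * Ssum := by
    rw [hBterm]
    have hsplitsum := Finset.sum_filter_add_sum_filter_not univ
      (fun u => u ∉ VQ) (fun w => sig w * cnt2 w)
    have hzero : ∑ w ∈ univ.filter (fun w : V => ¬ w ∉ VQ), sig w * cnt2 w = 0 := by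
      apply Finset.sum_eq_zero
      intro w hw
      rw [mem_filter] at hw
      rw [hcnt2_zero w (not_not.mp hw.2), mul_zero]
    have hbound : ∑ w ∈ out, sig w * cnt2 w ≤ 3 * k * Ssum := by
      rw [hSsumdef, Finset.mul_sum]
      apply Finset.sum_le_sum
      intro w hw
      rw [hout, mem_filter] at hw
      calc sig w * cnt2 w ≤ sig w * (3*k) := by
            apply Nat.mul_le_mul_left
            exact le_trans (hcnt2_le w) (hdeg3k w hw.2)
        _ = 3 * k * sig w := by ring
    rw [hout] at hbound
    omega
  -- supply: Ssum ≤ 4kq + Bsum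
  have hTgam : ∀ γ : C, (∑ u, ((G.neighborFinset u).filter (fun w => c s(u,w) = γ)).card)
      ≤ 2 * (E.filter (fun e => c e = γ)).card := by
    intro γ
    set P2 : Finset (V × V) :=
      (univ ×ˢ univ).filter (fun p => G.Adj p.1 p.2 ∧ c s(p.1,p.2) = γ) with hP2
    have hcardP2 : P2.card = ∑ u, ((G.neighborFinset u).filter (fun w => c s(u,w) = γ)).card := by
      rw [hP2, Finset.card_filter, Finset.sum_product]
      apply Finset.sum_congr rfl
      intro u _
      rw [← Finset.card_filter]
      apply congrArg Finset.card
      ext w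
      rw [mem_filter, mem_filter, SimpleGraph.mem_neighborFinset]
      constructor
      · rintro ⟨-, h1, h2⟩; exact ⟨h1, h2⟩
      · rintro ⟨h1, h2⟩; exact ⟨mem_univ w, h1, h2⟩
    have hP2le : P2.card ≤ 2 * (E.filter (fun e => c e = γ)).card := by
      apply Finset.card_le_mul_card_image_of_maps_to
        (t := E.filter (fun e => c e = γ)) (f := fun p : V × V => s(p.1, p.2))
      · intro p hp
        rw [hP2, mem_filter] at hp
        rw [mem_filter, hE, mem_edgeFinset]
        exact ⟨hp.2.1, hp.2.2⟩
      · intro e _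
        induction e using Sym2.ind with
        | _ a b' =>
        have hsub : P2.filter (fun p : V × V => s(p.1, p.2) = s(a,b'))
            ⊆ {(a, b'), (b', a)} := by
          intro p hp
          rw [mem_filter] at hp
          rcases Sym2.eq_iff.mp hp.2 with ⟨h1, h2⟩ | ⟨h1, h2⟩
          · rw [mem_insert]
            left
            exact Prod.ext h1 h2
          · rw [mem_insert, mem_singleton]
            right
            exact Prod.ext h1 h2
        refine le_trans (card_le_card hsub) ?_
        exact le_trans (card_insert_le _ _) (by simp)
    omega
  have hSupply : Ssum ≤ 4 * k * q + Bsum := by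
    have h1 : Ssum = ∑ u ∈ out, usd u + ∑ u ∈ out, blk u := by
      rw [hSsumdef, ← Finset.sum_add_distrib]
      exact Finset.sum_congr rfl (fun u _ => hsigsplit u)
    have h2 : ∑ u ∈ out, blk u ≤ Bsum := by
      rw [← hsumNBVQ]
      calc ∑ u ∈ out, blk u
          ≤ ∑ u ∈ out, ((G.neighborFinset u).filter (fun w => w ∈ VQ)).card := by
            apply Finset.sum_le_sum
            intro u hu
            rw [hout, mem_filter] at hu
            rw [hblk]
            apply card_le_card
            intro w hw
            rw [mem_filter] at hw ⊢
            exact ⟨hw.1, hblocked u w hu.2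
              ((SimpleGraph.mem_neighborFinset _ _ _).mp hw.1) hw.2.1 hw.2.2⟩
        _ ≤ ∑ u, ((G.neighborFinset u).filter (fun w => w ∈ VQ)).card := by
            rw [hout]
            exact Finset.sum_le_sum_of_subset (filter_subset _ _)
    have h3 : ∑ u ∈ out, usd u ≤ 4 * k * q := by
      have h31 : ∑ u ∈ out, usd u ≤ ∑ u, usd u := by
        rw [hout]
        exact Finset.sum_le_sum_of_subset (filter_subset _ _)
      have h32 : ∀ u : V, usd u ≤
          ∑ γ ∈ Qimg, ((G.neighborFinset u).filter (fun w => c s(u,w) = γ)).card := by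
        intro u
        rw [husd]
        have heq := Finset.card_eq_sum_card_fiberwise
          (s := (G.neighborFinset u).filter (fun w => c s(u,w) ∈ Qimg)) (t := Qimg)
          (f := fun w => c s(u,w)) (fun w hw => (mem_filter.mp hw).2)
        refine le_trans (le_of_eq heq) ?_
        apply Finset.sum_le_sum
        intro γ _
        apply card_le_card
        intro w hw
        rw [mem_filter] at hw ⊢
        exact ⟨(mem_filter.mp hw.1).1, hw.2⟩
      have h33 : ∑ u, usd u ≤
          ∑ γ ∈ Qimg, (∑ u, ((G.neighborFinset u).filter (fun w => c s(u,w) = γ)).card) := by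
        calc ∑ u, usd u
            ≤ ∑ u, ∑ γ ∈ Qimg,
                ((G.neighborFinset u).filter (fun w => c s(u,w) = γ)).card :=
              Finset.sum_le_sum (fun u _ => h32 u)
          _ = _ := Finset.sum_comm
      have h34 : ∑ γ ∈ Qimg,
          (∑ u, ((G.neighborFinset u).filter (fun w => c s(u,w) = γ)).card) ≤
          Qimg.card * (4*k) := by
        apply Finset.sum_le_card_nsmul
        intro γ hγ
        have hsm := hQimgsmall γ hγ
        rw [hBig] at hsm
        push_neg at hsm
        have := hTgam γ
        omega
      have h35 : Qimg.card * (4*k) ≤ 4 * k * q := by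
        calc Qimg.card * (4*k) ≤ q * (4*k) := Nat.mul_le_mul_right _ hQimgcard
          _ = 4 * k * q := by ring
      omega
    omega
  -- conclude
  rcases Nat.eq_zero_or_pos q with hq0 | hqpos
  · -- q = 0 : all colors big, so t = b, and k - 1 ≤ t ≤ k - 1
    have hallbig : ∀ γ ∈ allCol, Big γ := by
      intro γ hγ
      by_contra hsm
      obtain ⟨e, heE, rfl⟩ := mem_image.mp hγ
      have hins : ({e} : Finset (Sym2 V)) ∈ cand := by
        rw [hcand, mem_filter]
        refine ⟨mem_powerset.mpr ?_, ?_, ?_, ?_⟩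
        · intro x hx; rw [mem_singleton] at hx; subst hx; exact heE
        · intro f hf; rw [mem_singleton] at hf; subst hf; exact hsm
        · intro f hf g hg hne
          rw [mem_singleton] at hf hg
          subst hf; subst hg
          exact absurd rfl hne
        · simp
      have := hQmax _ hins
      rw [card_singleton] at this
      omega
    have hbeq : bigCol = allCol := by
      rw [hbigCol]
      exact filter_true_of_mem hallbig
    have hgoal : c '' G.edgeSet = ↑allCol := by
      rw [hallCol, hE, coe_image, coe_edgeFinset]
    rw [hgoal, Set.ncard_coe_finset]
    have hbcard : b = allCol.card := by rw [hb, hbeq]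
    omega
  · exfalso
    have f5 : 1000 * Bsum ≤ 2 * q * n := by
      rw [hBsum, Finset.mul_sum]
      calc ∑ x ∈ VQ, 1000 * G.degree x ≤ ∑ _x ∈ VQ, n :=
            Finset.sum_le_sum (fun x _ => hdeg1000 x)
        _ = VQ.card * n := by rw [Finset.sum_const, smul_eq_mul]
        _ ≤ (2*q) * n := Nat.mul_le_mul_right _ hVQcard
        _ = 2 * q * n := by ring
    -- numeric combination
    have c1 : 1000 * (q * (n * k)) ≤ 1000 * (q * (2*T + 4*Bsum)) := by
      apply Nat.mul_le_mul le_rfl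
      exact Nat.mul_le_mul le_rfl hTlow
    have c2 : 1000 * (q * (2*T + 4*Bsum)) = 2000 * (q*T) + 4 * (q * (1000 * Bsum)) := by ring
    have c3 : 2000 * (q*T) ≤ 2000 * (3*k*Ssum + 3*k*Ssum) := by
      apply Nat.mul_le_mul le_rfl
      refine le_trans hqT ?_
      rw [hS2split]
      exact Nat.add_le_add hA3 hB3
    have c4 : 2000 * ((3:ℕ)*k*Ssum + 3*k*Ssum) = 12 * (k * (1000 * Ssum)) := by ring
    have c5 : 12 * (k * (1000 * Ssum)) ≤ 12 * (k * (1000 * (4*k*q + Bsum))) := by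
      apply Nat.mul_le_mul le_rfl
      apply Nat.mul_le_mul le_rfl
      exact Nat.mul_le_mul le_rfl hSupply
    have c6 : 12 * (k * (1000 * ((4:ℕ)*k*q + Bsum)))
        = 96 * ((500 * k) * (k * q)) + 12 * (k * (1000 * Bsum)) := by ring
    have c7 : 96 * ((500 * k) * (k * q)) ≤ 96 * (n * (k * q)) := by
      apply Nat.mul_le_mul le_rfl
      exact Nat.mul_le_mul hkn le_rfl
    have c8 : 12 * (k * (1000 * Bsum)) ≤ 12 * (k * (2 * q * n)) := by
      apply Nat.mul_le_mul le_rfl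
      exact Nat.mul_le_mul le_rfl f5
    have c9 : 4 * (q * (1000 * Bsum)) ≤ 4 * (q * (2 * q * n)) := by
      apply Nat.mul_le_mul le_rfl
      exact Nat.mul_le_mul le_rfl f5
    have c10 : 4 * (q * (2 * q * n)) ≤ 4 * (q * (2 * k * n)) := by
      apply Nat.mul_le_mul le_rfl
      apply Nat.mul_le_mul le_rfl
      apply Nat.mul_le_mul ?_ le_rfl
      exact Nat.mul_le_mul le_rfl (le_of_lt hqk)
    have ceq : 96 * (n * (k * q)) + 12 * (k * (2 * q * n)) + 4 * (q * (2 * k * n))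
        = 128 * (q * (n * k)) := by ring
    have cfin : 1000 * (q * (n * k)) ≤ 128 * (q * (n * k)) := by omega
    have hpos : 0 < q * (n * k) := by
      apply Nat.mul_pos hqpos
      apply Nat.mul_pos ?_ hk
      omega
    set X := q * (n * k) with hX
    omega
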